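/- Let d ≥ 1, ε, δ ∈ (0,1), and let 𝒩 be a δ-approximation for the family of axis-parallel boxes in [0,1]^d of volume at least ε, with |𝒩| ≥ 3. If X_1, ..., X_N are independent random points uniform on [0,1]^d with N ≥ (3 ln|𝒩|)/δ, then with probability at least 1 - 1/|𝒩| the set {X_1,...,X_N} intersects every axis-parallel box of volume at least ε. Consequently N(ε,d) ≤ (3 ln|𝒩|)/δ. -/

import Mathlib

open MeasureTheory Finset
open scoped ENNReal

private lemma cube_vol' (d : ℕ) :
    (volume : Measure (Fin d → ℝ)) (Set.univ.pi fun _ => Set.Icc (0:ℝ) 1) = 1 := by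
  rw [volume_pi_pi]; simp [Real.volume_Icc]

private lemma miss_one' (d N : ℕ) (a b : Fin d → ℝ)
    (hab : ∀ i, 0 ≤ a i ∧ a i ≤ b i ∧ b i ≤ 1) :
    (Measure.pi fun _ : Fin N =>
        (volume : Measure (Fin d → ℝ)).restrict (Set.univ.pi fun _ => Set.Icc (0:ℝ) 1))
      {ω : Fin N → (Fin d → ℝ) | ∀ j, ω j ∉ Set.univ.pi fun i => Set.Ico (a i) (b i)}
      ≤ (1 - ENNReal.ofReal (∏ i, (b i - a i)))^N := by
  set B : Set (Fin d → ℝ) := Set.univ.pi fun i => Set.Ico (a i) (b i) with hB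
  set C : Set (Fin d → ℝ) := Set.univ.pi fun _ => Set.Icc (0:ℝ) 1 with hC
  have hBmeas : MeasurableSet B := MeasurableSet.univ_pi fun i => measurableSet_Ico
  have hBsub : B ⊆ C := by
    intro x hx i _
    have := hx i (Set.mem_univ i)
    have h := hab i
    exact ⟨le_trans h.1 this.1, le_of_lt (lt_of_lt_of_le this.2 h.2.2)⟩
  have hvolB : (volume : Measure (Fin d → ℝ)) B = ENNReal.ofReal (∏ i, (b i - a i)) := by
    rw [hB, volume_pi_pi, ENNReal.ofReal_prod_of_nonneg (fun i _ => by linarith [(hab i).2.1])]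
    simp [Real.volume_Ico]
  have hrest : (volume : Measure (Fin d → ℝ)).restrict C B = ENNReal.ofReal (∏ i, (b i - a i)) := by
    rw [Measure.restrict_apply hBmeas, Set.inter_eq_left.mpr hBsub, hvolB]
  have hrestuniv : (volume : Measure (Fin d → ℝ)).restrict C Set.univ = 1 := by
    rw [Measure.restrict_apply_univ, hC, cube_vol']
  have hcompl : (volume : Measure (Fin d → ℝ)).restrict C Bᶜ
      = 1 - ENNReal.ofReal (∏ i, (b i - a i)) := by
    rw [measure_compl hBmeas (by rw [hrest]; exact ENNReal.ofReal_ne_top), hrestuniv, hrest]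
  have hset : {ω : Fin N → (Fin d → ℝ) | ∀ j, ω j ∉ B} = Set.univ.pi fun _ : Fin N => Bᶜ := by
    ext ω; simp [Set.mem_pi]
  rw [hset, Measure.pi_pi, Finset.prod_const, hcompl]
  simp

/-- Union-bound lemma: given a `δ`-approximation `𝒩` (of cardinality ≥ 3) for the
boxes of volume ≥ ε, `N ≥ 3 ln|𝒩|/δ` independent uniform points hit every box of
volume ≥ ε with probability at least `1 - 1/|𝒩|`; consequently `N(ε,d) ≤ 3 ln|𝒩|/δ`. -/
theorem stmt_10 (d : ℕ) (hd : 1 ≤ d) (ε δ : ℝ)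
    (hε : ε ∈ Set.Ioo (0:ℝ) 1) (hδ : δ ∈ Set.Ioo (0:ℝ) 1)
    (𝒩 : Finset ((Fin d → ℝ) × (Fin d → ℝ)))
    (h𝒩box : ∀ p ∈ 𝒩, ∀ i, 0 ≤ p.1 i ∧ p.1 i ≤ p.2 i ∧ p.2 i ≤ 1)
    (h𝒩card : 3 ≤ 𝒩.card)
    (happrox : ∀ a b : Fin d → ℝ, (∀ i, 0 ≤ a i ∧ a i ≤ b i ∧ b i ≤ 1) →
      ε ≤ ∏ i, (b i - a i) →
      ∃ p ∈ 𝒩, (∀ i, a i ≤ p.1 i ∧ p.2 i ≤ b i) ∧ δ ≤ ∏ i, (p.2 i - p.1 i)) :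
    (∀ N : ℕ, 3 * Real.log 𝒩.card / δ ≤ N →
      1 - 1 / (𝒩.card : ℝ) ≤
        ((Measure.pi fun _ : Fin N =>
            (volume : Measure (Fin d → ℝ)).restrict (Set.univ.pi fun _ => Set.Icc (0:ℝ) 1))
          {ω : Fin N → (Fin d → ℝ) |
            ∀ a b : Fin d → ℝ, (∀ i, 0 ≤ a i ∧ a i ≤ b i ∧ b i ≤ 1) →
              ε ≤ ∏ i, (b i - a i) →
              ∃ j, ω j ∈ Set.univ.pi fun i => Set.Ico (a i) (b i)}).toReal) ∧
    ∃ P : Finset (Fin d → ℝ),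
      (P : Set (Fin d → ℝ)) ⊆ (Set.univ.pi fun _ => Set.Icc (0:ℝ) 1) ∧
      (P.card : ℝ) ≤ 3 * Real.log 𝒩.card / δ ∧
      ∀ a b : Fin d → ℝ, (∀ i, 0 ≤ a i ∧ a i ≤ b i ∧ b i ≤ 1) →
        ε < ∏ i, (b i - a i) →
        ∃ x ∈ P, x ∈ Set.univ.pi fun i => Set.Ico (a i) (b i) := by
  obtain ⟨hε0, hε1⟩ := hε
  obtain ⟨hδ0, hδ1⟩ := hδ
  have hn3 : (3:ℝ) ≤ 𝒩.card := by exact_mod_cast h𝒩card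
  have hn0 : (0:ℝ) < 𝒩.card := by linarith
  have h1δ : 0 ≤ 1 - δ := by linarith
  have hlogn : 0 < Real.log 𝒩.card := Real.log_pos (by linarith)
  set S : (N : ℕ) → Set (Fin N → (Fin d → ℝ)) := fun N =>
    {ω : Fin N → (Fin d → ℝ) |
      ∀ a b : Fin d → ℝ, (∀ i, 0 ≤ a i ∧ a i ≤ b i ∧ b i ≤ 1) →
        ε ≤ ∏ i, (b i - a i) →
        ∃ j, ω j ∈ Set.univ.pi fun i => Set.Ico (a i) (b i)} with hS
  set μ : (N : ℕ) → Measure (Fin N → (Fin d → ℝ)) := fun N =>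
    Measure.pi fun _ : Fin N =>
      (volume : Measure (Fin d → ℝ)).restrict (Set.univ.pi fun _ => Set.Icc (0:ℝ) 1) with hμ
  have hμuniv : ∀ N : ℕ, μ N Set.univ = 1 := by
    intro N
    rw [hμ]
    rw [show (Set.univ : Set (Fin N → (Fin d → ℝ))) = Set.univ.pi fun _ : Fin N => Set.univ by
      simp]
    rw [Measure.pi_pi]
    simp only [Measure.restrict_apply_univ, cube_vol', Finset.prod_const, one_pow]
  -- key union bound on the complement
  have key : ∀ N : ℕ, μ N (S N)ᶜ ≤ (𝒩.card : ℝ≥0∞) * ENNReal.ofReal ((1 - δ)^N) := by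
    intro N
    have hsub : (S N)ᶜ ⊆
        ⋃ p ∈ 𝒩, {ω : Fin N → (Fin d → ℝ) |
          δ ≤ ∏ i, (p.2 i - p.1 i) ∧
          ∀ j, ω j ∉ Set.univ.pi fun i => Set.Ico (p.1 i) (p.2 i)} := by
      intro ω hω
      rw [hS] at hω
      simp only [Set.mem_compl_iff, Set.mem_setOf_eq, not_forall, not_exists] at hω
      obtain ⟨a, b, hab, hvol, hmiss⟩ := hω
      obtain ⟨p, hp𝒩, hpsub, hpvol⟩ := happrox a b hab hvol
      refine Set.mem_biUnion hp𝒩 ⟨hpvol, fun j hj => hmiss j ?_⟩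
      intro i _
      have h1 := hj i (Set.mem_univ i)
      have h2 := hpsub i
      exact ⟨le_trans h2.1 h1.1, lt_of_lt_of_le h1.2 h2.2⟩
    calc μ N (S N)ᶜ ≤ μ N (⋃ p ∈ 𝒩, {ω : Fin N → (Fin d → ℝ) |
          δ ≤ ∏ i, (p.2 i - p.1 i) ∧
          ∀ j, ω j ∉ Set.univ.pi fun i => Set.Ico (p.1 i) (p.2 i)}) := measure_mono hsub
      _ ≤ ∑ p ∈ 𝒩, μ N {ω : Fin N → (Fin d → ℝ) |
          δ ≤ ∏ i, (p.2 i - p.1 i) ∧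
          ∀ j, ω j ∉ Set.univ.pi fun i => Set.Ico (p.1 i) (p.2 i)} :=
        measure_biUnion_finset_le 𝒩 _
      _ ≤ ∑ _p ∈ 𝒩, ENNReal.ofReal ((1 - δ)^N) := by
          apply Finset.sum_le_sum
          intro p hp
          by_cases hpd : δ ≤ ∏ i, (p.2 i - p.1 i)
          · calc μ N {ω : Fin N → (Fin d → ℝ) |
                δ ≤ ∏ i, (p.2 i - p.1 i) ∧
                ∀ j, ω j ∉ Set.univ.pi fun i => Set.Ico (p.1 i) (p.2 i)}
                ≤ μ N {ω : Fin N → (Fin d → ℝ) |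
                  ∀ j, ω j ∉ Set.univ.pi fun i => Set.Ico (p.1 i) (p.2 i)} :=
                  measure_mono (fun ω hω => hω.2)
              _ ≤ (1 - ENNReal.ofReal (∏ i, (p.2 i - p.1 i)))^N :=
                  miss_one' d N p.1 p.2 (h𝒩box p hp)
              _ ≤ (1 - ENNReal.ofReal δ)^N :=
                  pow_le_pow_left' (tsub_le_tsub_left (ENNReal.ofReal_le_ofReal hpd) 1) N
              _ = ENNReal.ofReal ((1 - δ)^N) := by
                  rw [ENNReal.ofReal_pow h1δ]
                  congr 1
                  rw [← ENNReal.ofReal_one, ← ENNReal.ofReal_sub _ (le_of_lt hδ0)]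
          · have hempty : {ω : Fin N → (Fin d → ℝ) |
                δ ≤ ∏ i, (p.2 i - p.1 i) ∧
                ∀ j, ω j ∉ Set.univ.pi fun i => Set.Ico (p.1 i) (p.2 i)} = ∅ := by
              ext ω; simp [hpd]
            rw [hempty]; simp
      _ = (𝒩.card : ℝ≥0∞) * ENNReal.ofReal ((1 - δ)^N) := by
          rw [Finset.sum_const, nsmul_eq_mul]
  -- from the union bound, a lower bound on the good event
  have lower : ∀ N : ℕ, ∀ c : ℝ, (𝒩.card : ℝ) * (1 - δ)^N ≤ c →
      1 - ENNReal.ofReal c ≤ μ N (S N) := by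
    intro N c hbound
    have h1 : (1 : ℝ≥0∞) ≤ μ N (S N) + ENNReal.ofReal c := by
      calc (1 : ℝ≥0∞) = μ N Set.univ := (hμuniv N).symm
        _ = μ N (S N ∪ (S N)ᶜ) := by rw [Set.union_compl_self]
        _ ≤ μ N (S N) + μ N (S N)ᶜ := measure_union_le _ _
        _ ≤ μ N (S N) + ENNReal.ofReal c := by
            gcongr
            calc μ N (S N)ᶜ ≤ (𝒩.card : ℝ≥0∞) * ENNReal.ofReal ((1 - δ)^N) := key N
              _ = ENNReal.ofReal ((𝒩.card : ℝ) * (1 - δ)^N) := by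
                  rw [ENNReal.ofReal_mul (le_of_lt hn0), ENNReal.ofReal_natCast]
              _ ≤ ENNReal.ofReal c := ENNReal.ofReal_le_ofReal hbound
    exact tsub_le_iff_right.mpr h1
  have hSfin : ∀ N : ℕ, μ N (S N) ≠ ⊤ := fun N =>
    ne_top_of_le_ne_top (by rw [hμuniv N]; exact ENNReal.one_ne_top)
      (measure_mono (Set.subset_univ _))
  have hpowexp : ∀ M : ℕ, (1 - δ)^M ≤ Real.exp (-(δ * M)) := by
    intro M
    calc (1 - δ)^M ≤ (Real.exp (-δ))^M := by
          apply pow_le_pow_left₀ h1δ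
          linarith [Real.add_one_le_exp (-δ)]
      _ = Real.exp (-(δ * M)) := by rw [← Real.exp_nat_mul]; ring_nf
  have hexp3 : Real.exp (-(3 * Real.log 𝒩.card)) = 1 / (𝒩.card : ℝ)^3 := by
    rw [Real.exp_neg, show (3:ℝ) * Real.log 𝒩.card = (3:ℕ) * Real.log 𝒩.card by norm_num,
      Real.exp_nat_mul, Real.exp_log hn0, one_div]
  constructor
  · -- part 1
    intro N hN
    have hnum : (𝒩.card : ℝ) * (1 - δ)^N ≤ 1 / 𝒩.card := by
      have hdN : 3 * Real.log 𝒩.card ≤ δ * N := by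
        have := (div_le_iff₀ hδ0).mp hN
        linarith
      have h3 : (1 - δ)^N ≤ 1 / (𝒩.card : ℝ)^3 := by
        calc (1 - δ)^N ≤ Real.exp (-(δ * N)) := hpowexp N
          _ ≤ Real.exp (-(3 * Real.log 𝒩.card)) := Real.exp_le_exp.mpr (by linarith)
          _ = 1 / (𝒩.card : ℝ)^3 := hexp3
      calc (𝒩.card : ℝ) * (1 - δ)^N ≤ (𝒩.card : ℝ) * (1 / (𝒩.card : ℝ)^3) := by
            apply mul_le_mul_of_nonneg_left h3 (le_of_lt hn0)
        _ = 1 / (𝒩.card : ℝ)^2 := by field_simp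
        _ ≤ 1 / 𝒩.card := by
            apply one_div_le_one_div_of_le hn0
            nlinarith
    have hge := lower N (1 / 𝒩.card) hnum
    have hto := ENNReal.toReal_mono (hSfin N) hge
    rw [ENNReal.toReal_sub_of_le
        (ENNReal.ofReal_le_one.mpr (by rw [div_le_one hn0]; linarith)) ENNReal.one_ne_top,
      ENNReal.toReal_one, ENNReal.toReal_ofReal (by positivity)] at hto
    exact hto
  · -- part 2
    set M := Nat.floor (3 * Real.log 𝒩.card / δ) with hM
    have hx0 : (0:ℝ) ≤ 3 * Real.log 𝒩.card / δ := by positivity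
    have hMx : (M:ℝ) ≤ 3 * Real.log 𝒩.card / δ := Nat.floor_le hx0
    have hxM : 3 * Real.log 𝒩.card / δ - 1 ≤ (M:ℝ) := by
      have := Nat.sub_one_lt_floor (3 * Real.log 𝒩.card / δ)
      rw [← hM] at this
      linarith
    have hnum2 : (𝒩.card : ℝ) * (1 - δ)^M < 1 := by
      have hdM : 3 * Real.log 𝒩.card - δ ≤ δ * M := by
        have h := mul_le_mul_of_nonneg_left hxM (le_of_lt hδ0)
        have hδx : δ * (3 * Real.log 𝒩.card / δ) = 3 * Real.log 𝒩.card := by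
          field_simp
        nlinarith
      have hval : Real.exp (δ - 3 * Real.log 𝒩.card)
          = Real.exp δ * (1 / (𝒩.card : ℝ)^3) := by
        rw [show δ - 3 * Real.log 𝒩.card = δ + -(3 * Real.log 𝒩.card) by ring,
          Real.exp_add, hexp3]
      have h3 : (1 - δ)^M ≤ Real.exp δ * (1 / (𝒩.card : ℝ)^3) := by
        calc (1 - δ)^M ≤ Real.exp (-(δ * M)) := hpowexp M
          _ ≤ Real.exp (δ - 3 * Real.log 𝒩.card) := Real.exp_le_exp.mpr (by linarith)
          _ = Real.exp δ * (1 / (𝒩.card : ℝ)^3) := hval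
      have hed : Real.exp δ < 2.7182818286 :=
        lt_trans (Real.exp_lt_exp.mpr hδ1) Real.exp_one_lt_d9
      have hexpos : 0 < Real.exp δ := Real.exp_pos δ
      calc (𝒩.card : ℝ) * (1 - δ)^M ≤ (𝒩.card : ℝ) * (Real.exp δ * (1 / (𝒩.card : ℝ)^3)) :=
            mul_le_mul_of_nonneg_left h3 (le_of_lt hn0)
        _ = Real.exp δ / (𝒩.card : ℝ)^2 := by field_simp
        _ < 1 := by
            rw [div_lt_one (by positivity)]
            nlinarith
    have hpos : μ M (S M) ≠ 0 := by
      have hge := lower M ((𝒩.card : ℝ) * (1 - δ)^M) le_rfl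
      intro h0
      rw [h0] at hge
      have : (1 : ℝ≥0∞) ≤ ENNReal.ofReal ((𝒩.card : ℝ) * (1 - δ)^M) :=
        tsub_eq_zero_iff_le.mp (le_antisymm hge zero_le)
      rw [← ENNReal.ofReal_one] at this
      have := (ENNReal.ofReal_le_ofReal_iff (by positivity)).mp this
      linarith
    obtain ⟨ω, hω⟩ := nonempty_of_measure_ne_zero hpos
    rw [hS] at hω
    simp only [Set.mem_setOf_eq] at hω
    refine ⟨Finset.image (fun j => fun i => max 0 (min 1 (ω j i))) Finset.univ, ?_, ?_, ?_⟩
    · intro y hy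
      simp only [Finset.coe_image, Set.mem_image] at hy
      obtain ⟨j, -, rfl⟩ := hy
      intro i _
      exact ⟨le_max_left _ _, max_le zero_le_one (min_le_left _ _)⟩
    · calc ((Finset.image (fun j => fun i => max 0 (min 1 (ω j i))) Finset.univ).card : ℝ)
          ≤ ((Finset.univ : Finset (Fin M)).card : ℝ) := by
            exact_mod_cast Finset.card_image_le
        _ = (M : ℝ) := by simp
        _ ≤ 3 * Real.log 𝒩.card / δ := hMx
    · intro a b hab hlt
      obtain ⟨j, hj⟩ := hω a b hab (le_of_lt hlt)
      refine ⟨fun i => max 0 (min 1 (ω j i)),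
        Finset.mem_image_of_mem _ (Finset.mem_univ j), ?_⟩
      intro i _
      have h1 := hj i (Set.mem_univ i)
      have h2 := hab i
      have hmin : min 1 (ω j i) = ω j i :=
        min_eq_right (le_of_lt (lt_of_lt_of_le h1.2 h2.2.2))
      have hmax : max 0 (min 1 (ω j i)) = ω j i := by
        rw [hmin]; exact max_eq_right (le_trans h2.1 h1.1)
      dsimp only
      rw [hmax]
      exact h1
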